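/- Let F be a field, ω ∈ F a primitive n-th root of unity, and suppose n = r + 2t with r ≥ 1 and t ≥ 1. Let E_i denote the i-th row of the Fourier matrix F_n, and set A = span{E_1, …, E_{t+1}}, B = span{E_0, …, E_{t−1}}, and 𝒞 = span{E_0, E_1, …, E_{r−1}}. Then (A, B) is a t-error-correcting pair for 𝒞; explicitly: (1) for all a ∈ A and b ∈ B the star product a*b lies in 𝒞^⊥; (2) dim A = t + 1 > t; (3) every nonzero a ∈ A has Hamming weight at least n − t and every nonzero c ∈ 𝒞 has Hamming weight at least 2t + 1 (so d(A) + d(𝒞) > n); (4) every nonzero v ∈ B^⊥ has Hamming weight at least t + 1 (so d(B^⊥) > t). -/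

import Mathlib

/-- The Hamming weight of a vector: the number of its nonzero coordinates. -/
noncomputable def hammingWt {n : ℕ} {F : Type*} [Zero F] (v : Fin n → F) : ℕ :=
  Nat.card {j : Fin n // v j ≠ 0}

/-- The dual code `C^⊥ = {v ∈ F^n : Σ_j v_j c_j = 0 for all c ∈ C}`. -/
def dualCode {F : Type*} [Field F] {n : ℕ} (C : Submodule F (Fin n → F)) :
    Submodule F (Fin n → F) where
  carrier := {v | ∀ c ∈ C, ∑ j, v j * c j = 0}
  zero_mem' := by
    intro c _
    simp
  add_mem' := by
    intro a b ha hb c hc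
    simp only [Set.mem_setOf_eq] at *
    simp [add_mul, Finset.sum_add_distrib, ha c hc, hb c hc]
  smul_mem' := by
    intro r a ha c hc
    simp only [Set.mem_setOf_eq] at *
    simp [mul_assoc, ← Finset.mul_sum, ha c hc]


open Polynomial Finset
open scoped Classical

section Helpers
variable {F : Type*} [Field F] {n : ℕ} {ω : F}

/-- Geometric sum of a nontrivial power of a primitive root vanishes. -/
lemma geom_zero (hω : IsPrimitiveRoot ω n) {s : ℕ} (hs1 : 0 < s) (hs2 : s < n) :
    ∑ j : Fin n, ω ^ (s * (j : ℕ)) = 0 := by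
  have hne : ω ^ s ≠ 1 := hω.pow_ne_one_of_pos_of_lt hs1.ne' hs2
  have h1 : ∑ j : Fin n, ω ^ (s * (j : ℕ)) = ∑ j ∈ range n, (ω ^ s) ^ j := by
    rw [← Fin.sum_univ_eq_sum_range (fun j => (ω ^ s) ^ j) n]
    exact Finset.sum_congr rfl fun j _ => (pow_mul ω s j)
  rw [h1, geom_sum_eq hne, ← pow_mul, mul_comm, pow_mul, hω.pow_eq_one, one_pow,
    sub_self, zero_div]

/-- Root-count bound: a nonzero polynomial vanishes at at most `natDegree` of the
distinct points `ω ^ j`. -/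
lemma count_roots_le (hω : IsPrimitiveRoot ω n) {q : F[X]} (hq : q ≠ 0) :
    (univ.filter fun j : Fin n => q.eval (ω ^ (j : ℕ)) = 0).card ≤ q.natDegree := by
  classical
  have h := Finset.card_le_card_of_injOn (fun j : Fin n => ω ^ (j : ℕ))
    (s := univ.filter fun j : Fin n => q.eval (ω ^ (j : ℕ)) = 0)
    (t := q.roots.toFinset)
    (by
      intro j hj
      simp only [coe_filter, Set.mem_setOf_eq] at hj
      simp [Multiset.mem_toFinset, mem_roots hq, IsRoot, hj.2])
    (by
      intro j hj k hk hjk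
      exact Fin.ext (hω.pow_inj j.isLt k.isLt hjk))
  exact h.trans ((Multiset.toFinset_card_le _).trans (card_roots' q))

/-- The polynomial with coefficient vector `c`. -/
noncomputable def polyOf {k : ℕ} (c : Fin k → F) : F[X] :=
  ∑ i : Fin k, C (c i) * X ^ (i : ℕ)

lemma polyOf_eval {k : ℕ} (c : Fin k → F) (x : F) :
    (polyOf c).eval x = ∑ i : Fin k, c i * x ^ (i : ℕ) := by
  simp [polyOf, eval_finset_sum]

lemma polyOf_natDegree_le {k : ℕ} (c : Fin k → F) (d : ℕ) (hd : k ≤ d + 1) :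
    (polyOf c).natDegree ≤ d := by
  apply natDegree_sum_le_of_forall_le
  intro i _
  calc (C (c i) * X ^ (i : ℕ)).natDegree ≤ (i : ℕ) := natDegree_C_mul_X_pow_le _ _
    _ ≤ d := by omega
lemma polyOf_coeff {k : ℕ} (c : Fin k → F) (i : Fin k) :
    (polyOf c).coeff (i : ℕ) = c i := by
  classical
  rw [polyOf, finset_sum_coeff]
  rw [Finset.sum_eq_single i]
  · simp
  · intro b _ hb
    simp only [coeff_C_mul, coeff_X_pow]
    rw [if_neg, mul_zero]
    exact fun h => hb (Fin.ext h.symm)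
  · simp

lemma hammingWt_eq {v : Fin n → F} :
    hammingWt v = (univ.filter fun j => v j ≠ 0).card := by
  classical
  rw [hammingWt, Nat.card_eq_fintype_card, Fintype.card_subtype]

/-- Weight lower bound from a polynomial vanishing at the zero coordinates. -/
lemma wt_ge (hω : IsPrimitiveRoot ω n) {v : Fin n → F} {q : F[X]} {d : ℕ}
    (hq : q ≠ 0) (hdeg : q.natDegree ≤ d)
    (hz : ∀ j : Fin n, v j = 0 → q.eval (ω ^ (j : ℕ)) = 0) :
    n - d ≤ hammingWt v := by
  classical
  have h1 : (univ.filter fun j : Fin n => v j = 0).card ≤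
      (univ.filter fun j : Fin n => q.eval (ω ^ (j : ℕ)) = 0).card := by
    apply Finset.card_le_card
    intro j hj
    simp only [mem_filter] at *
    exact ⟨hj.1, hz j hj.2⟩
  have h2 := (h1.trans (count_roots_le hω hq)).trans hdeg
  have h3 : (univ.filter fun j : Fin n => v j = 0).card +
      (univ.filter fun j : Fin n => ¬ v j = 0).card = n := by
    rw [card_filter_add_card_filter_not]; simp
  rw [hammingWt_eq]
  simp only [ne_eq]
  omega

end Helpers


/-- Let `ω ∈ F` be a primitive `n`-th root of unity with
`n = r + 2t`, `r ≥ 1`, `t ≥ 1`.  With `E_i` the `i`-th row of the Fourier matrix,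
set `A = span{E_1, …, E_{t+1}}`, `B = span{E_0, …, E_{t-1}}` and
`𝒞 = span{E_0, …, E_{r-1}}`.  Then `(A, B)` is a `t`-error-correcting pair for
`𝒞`: (1) for all `a ∈ A`, `b ∈ B` the star product `a*b` lies in `𝒞^⊥`;
(2) `dim A = t + 1 > t`; (3) every nonzero `a ∈ A` has Hamming weight at least
`n - t` and every nonzero `c ∈ 𝒞` has Hamming weight at least `2t + 1`
(so `d(A) + d(𝒞) > n`); (4) every nonzero `v ∈ B^⊥` has Hamming weight at least
`t + 1` (so `d(B^⊥) > t`). -/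
theorem fourier_error_correcting_pair {F : Type*} [Field F]
    (n r t : ℕ) (ω : F) (hω : IsPrimitiveRoot ω n)
    (hr : 1 ≤ r) (ht : 1 ≤ t) (hn : n = r + 2 * t) :
    let E : ℕ → Fin n → F := fun i => fun j => ω ^ (i * (j : ℕ))
    let A := Submodule.span F (Set.range fun i : Fin (t + 1) => E ((i : ℕ) + 1))
    let B := Submodule.span F (Set.range fun i : Fin t => E (i : ℕ))
    let C := Submodule.span F (Set.range fun i : Fin r => E (i : ℕ))
    (∀ a ∈ A, ∀ b ∈ B, (fun j => a j * b j) ∈ dualCode C) ∧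
      Module.finrank F A = t + 1 ∧
      (∀ a ∈ A, a ≠ 0 → n - t ≤ hammingWt a) ∧
      (∀ c ∈ C, c ≠ 0 → 2 * t + 1 ≤ hammingWt c) ∧
      (∀ v ∈ dualCode B, v ≠ 0 → t + 1 ≤ hammingWt v) := by
  intro E A B C
  have hn0 : n ≠ 0 := by omega
  have hω0 : ω ≠ 0 := hω.ne_zero hn0
  -- evaluation of a linear combination of Fourier rows via `polyOf`
  have key : ∀ (k s : ℕ) (c : Fin k → F) (j : Fin n),
      (∑ i : Fin k, c i • E ((i : ℕ) + s)) j
        = ω ^ (s * (j : ℕ)) * (polyOf c).eval (ω ^ (j : ℕ)) := by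
    intro k s c j
    rw [Finset.sum_apply, polyOf_eval, Finset.mul_sum]
    refine Finset.sum_congr rfl fun i _ => ?_
    show c i * ω ^ (((i : ℕ) + s) * (j : ℕ))
        = ω ^ (s * (j : ℕ)) * (c i * (ω ^ (j : ℕ)) ^ (i : ℕ))
    rw [← pow_mul,
      show ((i : ℕ) + s) * (j : ℕ) = (j : ℕ) * (i : ℕ) + s * (j : ℕ) by ring, pow_add]
    ring
  have key0 : ∀ (k : ℕ) (c : Fin k → F) (j : Fin n),
      (∑ i : Fin k, c i • E (i : ℕ)) j = (polyOf c).eval (ω ^ (j : ℕ)) := by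
    intro k c j
    have h := key k 0 c j
    simpa using h
  -- expansion lemmas for sums against linear combinations
  have expandR : ∀ {k : ℕ} (γ : Fin k → F) (e : Fin k → Fin n → F) (u : Fin n → F),
      ∑ j, u j * (∑ i, γ i • e i) j = ∑ i, γ i * ∑ j, u j * e i j := by
    intro k γ e u
    simp only [Finset.sum_apply, Pi.smul_apply, smul_eq_mul, Finset.mul_sum]
    rw [Finset.sum_comm]
    refine Finset.sum_congr rfl fun i _ => ?_
    refine Finset.sum_congr rfl fun j _ => ?_
    ring
  have expandL : ∀ {k : ℕ} (γ : Fin k → F) (e : Fin k → Fin n → F) (w : Fin n → F),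
      ∑ j, (∑ i, γ i • e i) j * w j = ∑ i, γ i * ∑ j, e i j * w j := by
    intro k γ e w
    calc ∑ j, (∑ i, γ i • e i) j * w j
        = ∑ j, w j * (∑ i, γ i • e i) j := Finset.sum_congr rfl fun j _ => mul_comm _ _
      _ = ∑ i, γ i * ∑ j, w j * e i j := expandR γ e w
      _ = ∑ i, γ i * ∑ j, e i j * w j := Finset.sum_congr rfl fun i _ => by
            rw [Finset.sum_congr rfl fun j _ => mul_comm (w j) (e i j)]
  -- Part (1)
  have part1 : ∀ a ∈ A, ∀ b ∈ B, (fun j => a j * b j) ∈ dualCode C := by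
    intro a ha b hb
    obtain ⟨α, hα⟩ := (Submodule.mem_span_range_iff_exists_fun F).mp ha
    obtain ⟨β, hβ⟩ := (Submodule.mem_span_range_iff_exists_fun F).mp hb
    show ∀ c ∈ C, ∑ j, (a j * b j) * c j = 0
    intro c hc
    obtain ⟨γ, hγ⟩ := (Submodule.mem_span_range_iff_exists_fun F).mp hc
    rw [← hγ, expandR γ _ _]
    refine Finset.sum_eq_zero fun m _ => ?_
    have hm : ∑ j, (a j * b j) * E (m : ℕ) j = 0 := by
      have h1 : ∑ j, (a j * b j) * E (m : ℕ) j
          = ∑ j, a j * (b j * E (m : ℕ) j) :=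
        Finset.sum_congr rfl fun j _ => by ring
      rw [h1, ← hα, expandL α _ _]
      refine Finset.sum_eq_zero fun p _ => ?_
      have hp : ∑ j, E ((p : ℕ) + 1) j * (b j * E (m : ℕ) j) = 0 := by
        have h2 : ∑ j, E ((p : ℕ) + 1) j * (b j * E (m : ℕ) j)
            = ∑ j, b j * (E ((p : ℕ) + 1) j * E (m : ℕ) j) :=
          Finset.sum_congr rfl fun j _ => by ring
        rw [h2, ← hβ, expandL β _ _]
        refine Finset.sum_eq_zero fun q _ => ?_
        have hq : ∑ j, E (q : ℕ) j * (E ((p : ℕ) + 1) j * E (m : ℕ) j) = 0 := by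
          have h3 : ∀ j : Fin n, E (q : ℕ) j * (E ((p : ℕ) + 1) j * E (m : ℕ) j)
              = ω ^ (((q : ℕ) + ((p : ℕ) + 1) + (m : ℕ)) * (j : ℕ)) := by
            intro j
            show ω ^ ((q : ℕ) * (j : ℕ)) * (ω ^ (((p : ℕ) + 1) * (j : ℕ)) * ω ^ ((m : ℕ) * (j : ℕ))) = _
            rw [show ((q : ℕ) + ((p : ℕ) + 1) + (m : ℕ)) * (j : ℕ)
                = (q : ℕ) * (j : ℕ) + (((p : ℕ) + 1) * (j : ℕ) + (m : ℕ) * (j : ℕ)) by ring,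
              pow_add, pow_add]
          rw [Finset.sum_congr rfl fun j _ => h3 j]
          have hq1 : (q : ℕ) < t := q.isLt
          have hp1 : (p : ℕ) < t + 1 := p.isLt
          have hm1 : (m : ℕ) < r := m.isLt
          exact geom_zero hω (by omega) (by omega)
        rw [hq, mul_zero]
      rw [hp, mul_zero]
    rw [hm, mul_zero]
  refine ⟨part1, ?_, ?_, ?_, ?_⟩
  -- Part (2)
  · have lin : LinearIndependent F (fun i : Fin (t + 1) => E ((i : ℕ) + 1)) := by
      rw [Fintype.linearIndependent_iff]
      intro g hg i
      have hq : polyOf g = 0 := by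
        by_contra hq
        have hall : ∀ j : Fin n, (polyOf g).eval (ω ^ (j : ℕ)) = 0 := by
          intro j
          have h1 := key (t + 1) 1 g j
          rw [hg] at h1
          have h2 : ω ^ (1 * (j : ℕ)) ≠ 0 := pow_ne_zero _ hω0
          have h3 : (0 : Fin n → F) j = 0 := rfl
          rw [h3] at h1
          exact (mul_eq_zero.mp h1.symm).resolve_left h2
        have hcard : (Finset.univ.filter fun j : Fin n =>
            (polyOf g).eval (ω ^ (j : ℕ)) = 0) = Finset.univ :=
          Finset.filter_true_of_mem fun j _ => hall j
        have h4 := count_roots_le hω hq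
        rw [hcard] at h4
        have h5 : (polyOf g).natDegree ≤ t := polyOf_natDegree_le g t le_rfl
        have h6 : (Finset.univ : Finset (Fin n)).card = n := by simp
        omega
      have h7 := polyOf_coeff g i
      rw [hq] at h7
      simpa using h7.symm
    have h8 := finrank_span_eq_card lin
    rw [h8]
    simp
  -- Part (3a)
  · intro a ha h0
    obtain ⟨c, hc⟩ := (Submodule.mem_span_range_iff_exists_fun F).mp ha
    have heval : ∀ j : Fin n, a j = ω ^ (1 * (j : ℕ)) * (polyOf c).eval (ω ^ (j : ℕ)) := by
      intro j
      rw [← hc]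
      exact key (t + 1) 1 c j
    have hq : polyOf c ≠ 0 := by
      intro h
      apply h0
      funext j
      rw [heval j, h]
      simp
    refine wt_ge hω hq (polyOf_natDegree_le c t le_rfl) ?_
    intro j hj
    rw [heval j] at hj
    exact (mul_eq_zero.mp hj).resolve_left (pow_ne_zero _ hω0)
  -- Part (3b)
  · intro c hc h0
    obtain ⟨γ, hγ⟩ := (Submodule.mem_span_range_iff_exists_fun F).mp hc
    have heval : ∀ j : Fin n, c j = (polyOf γ).eval (ω ^ (j : ℕ)) := by
      intro j
      rw [← hγ]
      exact key0 r γ j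
    have hq : polyOf γ ≠ 0 := by
      intro h
      apply h0
      funext j
      rw [heval j, h]
      simp
    have h1 : n - (r - 1) ≤ hammingWt c :=
      wt_ge hω hq (polyOf_natDegree_le γ (r - 1) (by omega))
        (fun j hj => by rw [← heval j]; exact hj)
    omega
  -- Part (4)
  · intro v hv h0
    by_contra hlt
    push_neg at hlt
    rw [hammingWt_eq] at hlt
    classical
    set S : Finset (Fin n) := Finset.univ.filter fun j => v j ≠ 0 with hS
    obtain ⟨j0, hj0'⟩ := Function.ne_iff.mp h0
    have hj0 : v j0 ≠ 0 := by simpa using hj0'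
    have hj0S : j0 ∈ S := by simp [hS, hj0]
    have hdual : ∀ i : Fin t, ∑ j, v j * ω ^ ((i : ℕ) * (j : ℕ)) = 0 := by
      intro i
      exact hv (E (i : ℕ)) (Submodule.subset_span ⟨i, rfl⟩)
    have hpoly : ∀ g : Polynomial F, g.natDegree < t →
        ∑ j, v j * g.eval (ω ^ (j : ℕ)) = 0 := by
      intro g hg
      have h1 : ∀ j : Fin n, v j * g.eval (ω ^ (j : ℕ))
          = ∑ i ∈ Finset.range t, g.coeff i * (v j * ω ^ (i * (j : ℕ))) := by
        intro j
        rw [Polynomial.eval_eq_sum_range' hg, Finset.mul_sum]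
        refine Finset.sum_congr rfl fun i _ => ?_
        rw [← pow_mul, show (j : ℕ) * i = i * (j : ℕ) by ring]
        ring
      rw [Finset.sum_congr rfl fun j _ => h1 j, Finset.sum_comm]
      refine Finset.sum_eq_zero fun i hi => ?_
      rw [← Finset.mul_sum, hdual ⟨i, Finset.mem_range.mp hi⟩, mul_zero]
    set g : Polynomial F :=
      ∏ j ∈ S.erase j0, (Polynomial.X - Polynomial.C (ω ^ (j : ℕ))) with hg
    have hdeg : g.natDegree < t := by
      rw [hg, Polynomial.natDegree_prod _ _ fun j _ => Polynomial.X_sub_C_ne_zero _]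
      simp only [Polynomial.natDegree_X_sub_C]
      rw [Finset.sum_const, smul_eq_mul, mul_one]
      have h2 : (S.erase j0).card < S.card := Finset.card_erase_lt_of_mem hj0S
      omega
    have hzero := hpoly g hdeg
    have hsum : ∑ j, v j * g.eval (ω ^ (j : ℕ)) = v j0 * g.eval (ω ^ (j0 : ℕ)) := by
      rw [← Finset.sum_subset S.subset_univ (fun j _ hj => by
        have : v j = 0 := by
          by_contra h
          exact hj (by simp [hS, h])
        rw [this, zero_mul])]
      refine Finset.sum_eq_single_of_mem j0 hj0S fun j hjS hne => ?_
      have : g.eval (ω ^ (j : ℕ)) = 0 := by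
        rw [hg, Polynomial.eval_prod]
        refine Finset.prod_eq_zero (Finset.mem_erase.mpr ⟨hne, hjS⟩) ?_
        simp
      rw [this, mul_zero]
    rw [hsum] at hzero
    have hgne : g.eval (ω ^ (j0 : ℕ)) ≠ 0 := by
      rw [hg, Polynomial.eval_prod]
      refine Finset.prod_ne_zero_iff.mpr fun j hj => ?_
      simp only [Polynomial.eval_sub, Polynomial.eval_X, Polynomial.eval_C]
      rw [sub_ne_zero]
      intro h
      exact (Finset.mem_erase.mp hj).1 (Fin.ext (hω.pow_inj j0.isLt j.isLt h)).symm
    exact hgne ((mul_eq_zero.mp hzero).resolve_left hj0)
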